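/- arXiv:1409.6007 — 7 statements merged into one kernel-verified Lean document; each statement's English description precedes it below -/
import Mathlib

section
/- Let ν > 0, α > 0, P_M > 0 and let G : ℝ → ℝ be C¹ with G'(p) ≤ -α for all p and G(P_M) = 0, and let F(p) = p - νG(p). Let H : [-νG(0), P_M] → [0, P_M] be the inverse of the restriction of F to [0, P_M]. Then H is strictly increasing, differentiable on the interior of its domain with 0 < H'(w) ≤ 1/(1 + να) < 1, the value p_m := H(0) satisfies 0 < p_m ≤ P_M, and H(w) ≥ p_m for every w ∈ [0, P_M]. -/
open Set

/-- properties of the inverse `H` of the restriction of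
`F p = p - ν * G p` to `[0, P_M]`. -/
theorem stmt1 (ν α P_M : ℝ) (hν : 0 < ν) (hα : 0 < α) (hPM : 0 < P_M)
    (G : ℝ → ℝ) (hG : ContDiff ℝ 1 G) (hG' : ∀ p, deriv G p ≤ -α)
    (hGPM : G P_M = 0)
    (H : ℝ → ℝ)
    (hH1 : ∀ p ∈ Set.Icc (0:ℝ) P_M, H (p - ν * G p) = p)
    (hH2 : ∀ w ∈ Set.Icc (-(ν * G 0)) P_M,
      H w ∈ Set.Icc (0:ℝ) P_M ∧ H w - ν * G (H w) = w) :
    StrictMonoOn H (Set.Icc (-(ν * G 0)) P_M) ∧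
    (∀ w ∈ Set.Ioo (-(ν * G 0)) P_M,
      DifferentiableAt ℝ H w ∧ 0 < deriv H w ∧ deriv H w ≤ 1 / (1 + ν * α)) ∧
    1 / (1 + ν * α) < 1 ∧
    0 < H 0 ∧ H 0 ≤ P_M ∧
    (∀ w ∈ Set.Icc (0:ℝ) P_M, H 0 ≤ H w) := by
  have hGdiff : Differentiable ℝ G := hG.differentiable one_ne_zero
  set c : ℝ := 1 + ν * α with hc
  have hcpos : 0 < c := by positivity
  set F : ℝ → ℝ := fun p => p - ν * G p with hFdef
  have hFd : ∀ p, HasDerivAt F (1 - ν * deriv G p) p := fun p =>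
    (hasDerivAt_id p).sub (((hGdiff p).hasDerivAt).const_mul ν)
  have hder_big : ∀ p, c ≤ 1 - ν * deriv G p := by
    intro p
    have h1 : ν * deriv G p ≤ ν * (-α) := mul_le_mul_of_nonneg_left (hG' p) hν.le
    simp only [hc]; nlinarith
  -- growth of F
  have hgd : ∀ p, HasDerivAt (fun q => F q - c * q) (1 - ν * deriv G p - c) p := by
    intro p
    have := (hFd p).sub ((hasDerivAt_id p).const_mul c)
    exact this.congr_deriv (by ring)
  have hgmono : Monotone (fun q => F q - c * q) := by
    apply monotone_of_deriv_nonneg (fun p => (hgd p).differentiableAt)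
    intro p; rw [(hgd p).deriv]; linarith [hder_big p]
  have hgrow : ∀ a b : ℝ, a ≤ b → F a + c * (b - a) ≤ F b := by
    intro a b hab
    have := hgmono hab
    simp only at this
    nlinarith
  have hFmono : StrictMono F := by
    intro a b hab
    have h1 := hgrow a b hab.le
    nlinarith [mul_pos hcpos (sub_pos.mpr hab)]
  have hFcont : Continuous F := continuous_id.sub (continuous_const.mul hG.continuous)
  have hFsurj : Function.Surjective F := by
    intro y
    set b : ℝ := max 0 ((y - F 0) / c) with hbdef
    set a : ℝ := min 0 ((y - F 0) / c) with hadef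
    have hab : a ≤ b := le_trans (min_le_left _ _) (le_max_left _ _)
    have hFb : y ≤ F b := by
      have h1 := hgrow 0 b (le_max_left _ _)
      have h2 : (y - F 0) / c ≤ b := le_max_right _ _
      have h3 : y - F 0 ≤ c * b := by
        rw [div_le_iff₀ hcpos] at h2; linarith [h2]
      simp only [sub_zero] at h1; linarith
    have hFa : F a ≤ y := by
      have h1 := hgrow a 0 (min_le_left _ _)
      have h2 : a ≤ (y - F 0) / c := min_le_right _ _
      have h3 : c * a ≤ y - F 0 := by
        rw [le_div_iff₀ hcpos] at h2; linarith [h2]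
      nlinarith
    have := intermediate_value_Icc hab hFcont.continuousOn (Set.mem_Icc.mpr ⟨hFa, hFb⟩)
    obtain ⟨x, _, hx⟩ := this
    exact ⟨x, hx⟩
  -- G 0 > 0
  have hGd : ∀ p, HasDerivAt (fun q => -(G q) - α * q) (-(deriv G p) - α) p := by
    intro p
    have := ((hGdiff p).hasDerivAt).neg.sub ((hasDerivAt_id p).const_mul α)
    exact this.congr_deriv (by ring)
  have hGanti : Monotone (fun q => -(G q) - α * q) := by
    apply monotone_of_deriv_nonneg (fun p => (hGd p).differentiableAt)
    intro p; rw [(hGd p).deriv]; linarith [hG' p]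
  have hG0 : 0 < G 0 := by
    have := hGanti hPM.le
    simp only at this
    nlinarith [this]
  have hlt : -(ν * G 0) < 0 := by nlinarith
  -- H agrees with the global inverse of F
  set e := StrictMono.orderIsoOfSurjective F hFmono hFsurj with he
  have heF : ∀ x, F (e.symm x) = x := fun x =>
    StrictMono.orderIsoOfSurjective_self_symm_apply F hFmono hFsurj x
  have hHe : ∀ w ∈ Set.Icc (-(ν * G 0)) P_M, H w = e.symm w := by
    intro w hw
    have h2 := (hH2 w hw).2
    have : F (H w) = F (e.symm w) := by rw [heF]; exact h2
    exact hFmono.injective this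
  have hesymm_cont : Continuous (e.symm : ℝ → ℝ) := e.symm.toHomeomorph.continuous
  -- strict monotonicity of H on the interval
  have hmonoH : StrictMonoOn H (Set.Icc (-(ν * G 0)) P_M) := by
    intro x hx y hy hxy
    by_contra hcon
    push_neg at hcon
    have h1 := (hH2 x hx).2
    have h2 := (hH2 y hy).2
    have : F (H y) ≤ F (H x) := hFmono.monotone hcon
    simp only [hFdef] at this
    rw [h1, h2] at this
    linarith
  refine ⟨hmonoH, ?_, ?_, ?_, ?_, ?_⟩
  · intro w hw
    have hIoo_nhds : Set.Ioo (-(ν * G 0)) P_M ∈ nhds w := isOpen_Ioo.mem_nhds hw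
    have heq : ∀ᶠ y in nhds w, F (H y) = y := by
      filter_upwards [hIoo_nhds] with y hy
      exact (hH2 y (Set.mem_Icc_of_Ioo hy)).2
    have heq2 : H =ᶠ[nhds w] (e.symm : ℝ → ℝ) := by
      filter_upwards [hIoo_nhds] with y hy
      exact hHe y (Set.mem_Icc_of_Ioo hy)
    have hcontH : ContinuousAt H w := hesymm_cont.continuousAt.congr heq2.symm
    have hposd : 0 < 1 - ν * deriv G (H w) := lt_of_lt_of_le hcpos (hder_big (H w))
    have hne : (1 - ν * deriv G (H w)) ≠ 0 := hposd.ne'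
    have hHd : HasDerivAt H (1 - ν * deriv G (H w))⁻¹ w :=
      HasDerivAt.of_local_left_inverse hcontH (hFd (H w)) hne heq
    refine ⟨hHd.differentiableAt, ?_, ?_⟩
    · rw [hHd.deriv]; exact inv_pos.mpr hposd
    · rw [hHd.deriv, one_div]
      exact inv_anti₀ hcpos (hder_big (H w))
  · rw [div_lt_one hcpos]; nlinarith
  · have h0mem : (0:ℝ) ∈ Set.Icc (-(ν * G 0)) P_M := ⟨hlt.le, hPM.le⟩
    obtain ⟨⟨h1, _⟩, h2⟩ := hH2 0 h0mem
    rcases h1.lt_or_eq with h | h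
    · exact h
    · exfalso
      rw [← h] at h2
      nlinarith [mul_pos hν hG0]
  · exact ((hH2 0 ⟨hlt.le, hPM.le⟩).1).2
  · intro w hw
    exact hmonoH.monotoneOn ⟨hlt.le, hPM.le⟩ ⟨by linarith [hw.1], hw.2⟩ hw.1
end

section
/- Let P_M > 0 and, for each integer k ≥ 3, let a_k ≥ 0 be a real number and set p_k := (k/(k-1)) a_k^{k-1}. Assume p_k ≤ P_M for all k, that a_k converges to a real number a, and that p_k converges to a real number p. Then a ≤ 1 and p(1 - a) = 0. -/
open Filter

/-- the stiff-pressure-law limit relation `p (1 - a) = 0`, `a ≤ 1`. -/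
theorem stmt5 (P_M : ℝ) (hPM : 0 < P_M)
    (a : ℕ → ℝ) (p : ℕ → ℝ)
    (ha_nonneg : ∀ k, 3 ≤ k → 0 ≤ a k)
    (hp : ∀ k, 3 ≤ k → p k = ((k : ℝ) / ((k : ℝ) - 1)) * (a k) ^ (k - 1))
    (hp_bd : ∀ k, 3 ≤ k → p k ≤ P_M)
    (A P : ℝ)
    (ha_lim : Tendsto a atTop (nhds A))
    (hp_lim : Tendsto p atTop (nhds P)) :
    A ≤ 1 ∧ P * (1 - A) = 0 := by
  have hA0 : 0 ≤ A :=
    ge_of_tendsto ha_lim ((eventually_ge_atTop 3).mono fun k hk => ha_nonneg k hk)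
  have hA1 : A ≤ 1 := by
    by_contra h
    push_neg at h
    set c := (1 + A) / 2 with hc
    have hc1 : 1 < c := by simp only [hc]; linarith
    have hcA : c < A := by simp only [hc]; linarith
    have hev : ∀ᶠ k in atTop, c ≤ a k :=
      (ha_lim.eventually (eventually_gt_nhds hcA)).mono fun k hk => hk.le
    have hpow : Tendsto (fun k : ℕ => c ^ (k - 1)) atTop atTop :=
      (tendsto_pow_atTop_atTop_of_one_lt hc1).comp (tendsto_sub_atTop_nat 1)
    obtain ⟨k, hk3, hkc, hkP⟩ :=
      ((eventually_ge_atTop 3).and (hev.and (hpow.eventually_gt_atTop P_M))).exists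
    have hk1 : (1 : ℝ) ≤ (k : ℝ) / ((k : ℝ) - 1) := by
      have hk3' : (3 : ℝ) ≤ (k : ℝ) := by exact_mod_cast hk3
      rw [le_div_iff₀ (by linarith)]; linarith
    have hcpow : c ^ (k - 1) ≤ a k ^ (k - 1) :=
      pow_le_pow_left₀ (by linarith) hkc _
    have : P_M < p k := by
      rw [hp k hk3]
      calc P_M < c ^ (k - 1) := hkP
        _ = 1 * c ^ (k - 1) := (one_mul _).symm
        _ ≤ ((k : ℝ) / ((k : ℝ) - 1)) * (a k ^ (k - 1)) := by
            apply mul_le_mul hk1 hcpow (by positivity) (by linarith)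
    exact absurd (hp_bd k hk3) (not_le.mpr this)
  refine ⟨hA1, ?_⟩
  rcases eq_or_lt_of_le hA1 with hA | hA
  · rw [hA]; ring
  · -- A < 1, show P = 0
    set c := (1 + A) / 2 with hc
    have hc0 : 0 ≤ c := by simp only [hc]; linarith
    have hc1 : c < 1 := by simp only [hc]; linarith
    have hcA : A < c := by simp only [hc]; linarith
    have hev : ∀ᶠ k in atTop, a k ≤ c :=
      (ha_lim.eventually (eventually_lt_nhds hcA)).mono fun k hk => hk.le
    have hpow : Tendsto (fun k : ℕ => 2 * c ^ (k - 1)) atTop (nhds (2 * 0)) :=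
      Tendsto.const_mul 2
        ((tendsto_pow_atTop_nhds_zero_of_lt_one hc0 hc1).comp (tendsto_sub_atTop_nat 1))
    rw [mul_zero] at hpow
    have hP0 : 0 ≤ P :=
      ge_of_tendsto hp_lim ((eventually_ge_atTop 3).mono fun k hk => by
        rw [hp k hk]
        have hk3' : (3 : ℝ) ≤ (k : ℝ) := by exact_mod_cast hk
        exact mul_nonneg (div_nonneg (by linarith) (by linarith))
          (pow_nonneg (ha_nonneg k hk) _))
    have hPle : P ≤ 0 := by
      refine le_of_tendsto_of_tendsto hp_lim hpow ?_
      filter_upwards [eventually_ge_atTop 3, hev] with k hk3 hkc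
      have hk3' : (3 : ℝ) ≤ (k : ℝ) := by exact_mod_cast hk3
      have h2 : (k : ℝ) / ((k : ℝ) - 1) ≤ 2 := by
        rw [div_le_iff₀ (by linarith)]; linarith
      have hcpow : a k ^ (k - 1) ≤ c ^ (k - 1) :=
        pow_le_pow_left₀ (ha_nonneg k hk3) hkc _
      rw [hp k hk3]
      calc ((k : ℝ) / ((k : ℝ) - 1)) * a k ^ (k - 1)
          ≤ 2 * c ^ (k - 1) := by
            apply mul_le_mul h2 hcpow (pow_nonneg (ha_nonneg k hk3) _) (by norm_num)
        _ = (fun k : ℕ => 2 * c ^ (k - 1)) k := rfl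
    have : P = 0 := le_antisymm hPle hP0
    rw [this]; ring
end

section
/- Let d ≥ 1, ν > 0 and P_M ≥ 0. Suppose W : ℝ^d → ℝ is a bounded C² function and p : ℝ^d → ℝ is a function with 0 ≤ p(x) ≤ P_M for all x, such that -νΔW(x) + W(x) = p(x) for all x ∈ ℝ^d. Then 0 ≤ W(x) ≤ P_M for all x ∈ ℝ^d. -/
open Set

/-- Divergence of a vector field on `ℝ^d`: the trace of its (Fréchet) derivative. -/
noncomputable def vdiv {d : ℕ} (v : EuclideanSpace ℝ (Fin d) → EuclideanSpace ℝ (Fin d))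
    (x : EuclideanSpace ℝ (Fin d)) : ℝ :=
  LinearMap.trace ℝ (EuclideanSpace ℝ (Fin d)) (fderiv ℝ v x : _ →ₗ[ℝ] _)

/-- Laplacian of a scalar function on `ℝ^d`: divergence of the gradient. -/
noncomputable def lap {d : ℕ} (f : EuclideanSpace ℝ (Fin d) → ℝ)
    (x : EuclideanSpace ℝ (Fin d)) : ℝ :=
  vdiv (gradient f) x

open InnerProductSpace Finset Filter Topology

section Aux

lemma aux_trace_eq {d : ℕ} (T : EuclideanSpace ℝ (Fin d) →L[ℝ] EuclideanSpace ℝ (Fin d)) :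
    LinearMap.trace ℝ (EuclideanSpace ℝ (Fin d)) (T : _ →ₗ[ℝ] _)
      = ∑ i, T (EuclideanSpace.single i 1) i := by
  rw [LinearMap.trace_eq_matrix_trace ℝ (EuclideanSpace.basisFun (Fin d) ℝ).toBasis]
  simp [Matrix.trace, LinearMap.toMatrix_apply, Matrix.diag, OrthonormalBasis.coe_toBasis,
    OrthonormalBasis.coe_toBasis_repr_apply, EuclideanSpace.basisFun_repr,
    EuclideanSpace.basisFun_apply]

lemma aux_coord_symm {d : ℕ} (L : EuclideanSpace ℝ (Fin d) →L[ℝ] ℝ) (i : Fin d) :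
    (toDual ℝ (EuclideanSpace ℝ (Fin d))).symm L i = L (EuclideanSpace.single i 1) := by
  have h1 : L (EuclideanSpace.single i 1)
      = toDual ℝ (EuclideanSpace ℝ (Fin d)) ((toDual ℝ _).symm L) (EuclideanSpace.single i 1) := by
    simp
  rw [h1, toDual_apply_apply, EuclideanSpace.inner_single_right]; simp

lemma aux_grad_coord {d : ℕ} (f : EuclideanSpace ℝ (Fin d) → ℝ) (y : EuclideanSpace ℝ (Fin d))
    (i : Fin d) :
    gradient f y i = fderiv ℝ f y (EuclideanSpace.single i 1) := aux_coord_symm _ i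

lemma aux_lap_eq {d : ℕ} (f : EuclideanSpace ℝ (Fin d) → ℝ) (hf : ContDiff ℝ 2 f)
    (x : EuclideanSpace ℝ (Fin d)) :
    lap f x = ∑ i, fderiv ℝ (fderiv ℝ f) x (EuclideanSpace.single i 1)
      (EuclideanSpace.single i 1) := by
  have hd1 : Differentiable ℝ (fderiv ℝ f) :=
    (hf.fderiv_right (m := 1) (by norm_num)).differentiable one_ne_zero
  have hgd : DifferentiableAt ℝ (gradient f) x :=
    ((toDual ℝ (EuclideanSpace ℝ (Fin d))).symm.toContinuousLinearEquiv.differentiable.comp hd1) x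
  rw [lap, vdiv, aux_trace_eq]
  refine Finset.sum_congr rfl fun i _ => ?_
  have h1 : fderiv ℝ (fun y => gradient f y i) x
      = (EuclideanSpace.proj (𝕜 := ℝ) i).comp (fderiv ℝ (gradient f) x) :=
    ((EuclideanSpace.proj (𝕜 := ℝ) i).hasFDerivAt.comp x hgd.hasFDerivAt).fderiv
  have h2 : (fun y => gradient f y i)
      = fun y => fderiv ℝ f y (EuclideanSpace.single i 1) := funext fun y => aux_grad_coord f y i
  have h3' := ((ContinuousLinearMap.apply ℝ ℝ
      (EuclideanSpace.single (𝕜 := ℝ) (ι := Fin d) i 1)).hasFDerivAt.comp x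
      (hd1 x).hasFDerivAt).fderiv
  have h3 : fderiv ℝ (fun y => fderiv ℝ f y (EuclideanSpace.single i 1)) x
      = (ContinuousLinearMap.apply ℝ ℝ (EuclideanSpace.single i 1)).comp
          (fderiv ℝ (fderiv ℝ f) x) := h3'
  have h0 : (fderiv ℝ (gradient f) x (EuclideanSpace.single i 1)) i
      = ((EuclideanSpace.proj (𝕜 := ℝ) i).comp (fderiv ℝ (gradient f) x))
          (EuclideanSpace.single i 1) := rfl
  rw [h0, ← h1, h2, h3]
  rfl

lemma aux_deriv2_nonneg {g h : ℝ → ℝ} (hg : ∀ t, HasDerivAt g (h t) t) {L : ℝ}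
    (hh : HasDerivAt h L 0) (hmin : IsLocalMin g 0) : 0 ≤ L := by
  by_contra hL
  push_neg at hL
  have h0 : h 0 = 0 := by
    have := hmin.deriv_eq_zero
    rwa [(hg 0).deriv] at this
  have hslope : Tendsto (slope h 0) (𝓝[>] 0) (𝓝 L) :=
    ((hasDerivAt_iff_tendsto_slope.mp hh)).mono_left
      (nhdsWithin_mono 0 (fun t ht => ne_of_gt ht))
  have hev1 : ∀ᶠ t in 𝓝[>] (0:ℝ), slope h 0 t < 0 := hslope.eventually_lt_const hL
  have hev2 : ∀ᶠ t in 𝓝[>] (0:ℝ), g 0 ≤ g t :=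
    hmin.filter_mono nhdsWithin_le_nhds
  obtain ⟨u, hu, hsub⟩ := mem_nhdsGT_iff_exists_Ioo_subset.mp (hev1.and hev2)
  have hu0 : (0:ℝ) < u := hu
  set b := u / 2 with hb
  have hb0 : 0 < b := by positivity
  have hbu : b < u := by simp [hb]; linarith
  have hdiffg : Differentiable ℝ g := fun t => (hg t).differentiableAt
  obtain ⟨c, hc, hceq⟩ := exists_hasDerivAt_eq_slope g h hb0 hdiffg.continuous.continuousOn
    (fun t _ => hg t)
  have hcmem : c ∈ Set.Ioo (0:ℝ) u := ⟨hc.1, lt_trans hc.2 hbu⟩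
  have h1 := (hsub hcmem).1
  have h2 := (hsub ⟨hb0, hbu⟩).2
  rw [slope_def_field, h0, sub_zero, sub_zero] at h1
  have hc0 : (0:ℝ) < c := hcmem.1
  have hhc : h c < 0 := by
    rcases div_neg_iff.mp h1 with ⟨_, h'⟩ | ⟨h', _⟩
    · linarith
    · exact h'
  rw [hceq, sub_zero] at hhc
  rcases div_neg_iff.mp hhc with ⟨_, h'⟩ | ⟨h', _⟩
  · linarith
  · linarith

lemma aux_secondDeriv_nonneg {d : ℕ} {f : EuclideanSpace ℝ (Fin d) → ℝ} (hf : ContDiff ℝ 2 f)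
    {x : EuclideanSpace ℝ (Fin d)} (hmin : IsLocalMin f x) (v : EuclideanSpace ℝ (Fin d)) :
    0 ≤ fderiv ℝ (fderiv ℝ f) x v v := by
  set c : ℝ → EuclideanSpace ℝ (Fin d) := fun t => x + t • v with hcdef
  have hc : ∀ t, HasDerivAt c v t := fun t => by
    simpa [hcdef] using ((hasDerivAt_id t).smul_const v).const_add x
  have hc0 : c 0 = x := by simp [hcdef]
  have hdf : Differentiable ℝ f := hf.differentiable (by norm_num)
  have hd1 : Differentiable ℝ (fderiv ℝ f) :=
    (hf.fderiv_right (m := 1) (by norm_num)).differentiable one_ne_zero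
  have hg : ∀ t, HasDerivAt (fun s => f (c s)) (fderiv ℝ f (c t) v) t := fun t =>
    (hdf (c t)).hasFDerivAt.comp_hasDerivAt t (hc t)
  have h1 : HasFDerivAt (fun y => fderiv ℝ f y v)
      ((ContinuousLinearMap.apply ℝ ℝ v).comp (fderiv ℝ (fderiv ℝ f) x)) x := by
    exact (ContinuousLinearMap.apply ℝ ℝ v).hasFDerivAt.comp x (hd1 x).hasFDerivAt
  have hh : HasDerivAt (fun t => fderiv ℝ f (c t) v) (fderiv ℝ (fderiv ℝ f) x v v) 0 := by
    rw [← hc0] at h1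
    have h2 := h1.comp_hasDerivAt (f := c) 0 (hc 0)
    simpa [hc0, Function.comp_def] using h2
  have hgmin : IsLocalMin (fun s => f (c s)) 0 := by
    rw [← hc0] at hmin
    have ht : Tendsto c (𝓝 0) (𝓝 (c 0)) := (hc 0).continuousAt.tendsto
    exact hmin.comp_tendsto ht
  exact aux_deriv2_nonneg hg hh hgmin

lemma aux_second_pert {d : ℕ} (W : EuclideanSpace ℝ (Fin d) → ℝ) (hW : ContDiff ℝ 2 W) (ε : ℝ)
    (x₀ x : EuclideanSpace ℝ (Fin d)) (i : Fin d) :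
    fderiv ℝ (fderiv ℝ (fun y => W y + ε * ‖y - x₀‖ ^ 2)) x (EuclideanSpace.single i 1)
        (EuclideanSpace.single i 1)
      = fderiv ℝ (fderiv ℝ W) x (EuclideanSpace.single i 1) (EuclideanSpace.single i 1)
        + 2 * ε := by
  set e : EuclideanSpace ℝ (Fin d) := EuclideanSpace.single i 1 with he
  set v : EuclideanSpace ℝ (Fin d) → ℝ := fun y => W y + ε * ‖y - x₀‖ ^ 2 with hvdef
  have hdW : Differentiable ℝ W := hW.differentiable (by norm_num)
  have hq2 : ContDiff ℝ 2 (fun y : EuclideanSpace ℝ (Fin d) => ‖y - x₀‖ ^ 2) :=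
    (contDiff_norm_sq ℝ (n := 2)).comp (contDiff_id.sub contDiff_const)
  have hv : ContDiff ℝ 2 v := hW.add (contDiff_const.mul hq2)
  have hd1v : Differentiable ℝ (fderiv ℝ v) :=
    (hv.fderiv_right (m := 1) (by norm_num)).differentiable one_ne_zero
  have hd1W : Differentiable ℝ (fderiv ℝ W) :=
    (hW.fderiv_right (m := 1) (by norm_num)).differentiable one_ne_zero
  have hAv : fderiv ℝ (fun y => fderiv ℝ v y e) x
      = (ContinuousLinearMap.apply ℝ ℝ e).comp (fderiv ℝ (fderiv ℝ v) x) := by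
    have h3' := ((ContinuousLinearMap.apply ℝ ℝ
        (EuclideanSpace.single (𝕜 := ℝ) (ι := Fin d) i 1)).hasFDerivAt.comp x
        (hd1v x).hasFDerivAt).fderiv
    exact h3'
  have hfun : (fun y => fderiv ℝ v y e)
      = fun y => fderiv ℝ W y e + 2 * ε * (y i - x₀ i) := by
    funext y
    have hq : HasFDerivAt (fun z : EuclideanSpace ℝ (Fin d) => ‖z - x₀‖ ^ 2)
        ((2:ℕ) • (innerSL ℝ (y - x₀)).comp
          (ContinuousLinearMap.id ℝ (EuclideanSpace ℝ (Fin d)))) y :=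
      ((hasFDerivAt_id y).sub_const x₀).norm_sq
    have h := (hdW y).hasFDerivAt.fun_add (hq.const_mul ε)
    rw [hvdef]
    rw [h.fderiv]
    have : ((y - x₀) : EuclideanSpace ℝ (Fin d)) i = y i - x₀ i := rfl
    simp [two_smul, he, EuclideanSpace.inner_single_right, this]
    ring
  have hlin : HasFDerivAt (fun y : EuclideanSpace ℝ (Fin d) => 2 * ε * (y i - x₀ i))
      ((2 * ε) • EuclideanSpace.proj (𝕜 := ℝ) i) x :=
    (((EuclideanSpace.proj (𝕜 := ℝ) i).hasFDerivAt.sub_const (x₀ i)).const_mul (2 * ε))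
  have hWpart : HasFDerivAt (fun y => fderiv ℝ W y e)
      ((ContinuousLinearMap.apply ℝ ℝ e).comp (fderiv ℝ (fderiv ℝ W) x)) x := by
    exact (ContinuousLinearMap.apply ℝ ℝ
        (EuclideanSpace.single (𝕜 := ℝ) (ι := Fin d) i 1)).hasFDerivAt.comp x
        (hd1W x).hasFDerivAt
  have hsum := (hWpart.fun_add hlin).fderiv
  have lhs : fderiv ℝ (fderiv ℝ v) x e e = fderiv ℝ (fun y => fderiv ℝ v y e) x e := by
    rw [hAv]; rfl
  rw [lhs, hfun, hsum]
  have : EuclideanSpace.proj (𝕜 := ℝ) i e = 1 := by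
    simp [he, EuclideanSpace.single_apply]
  simp [this]

lemma aux_lap_const_sub {d : ℕ} (W : EuclideanSpace ℝ (Fin d) → ℝ) (hW : ContDiff ℝ 2 W)
    (c : ℝ) (x : EuclideanSpace ℝ (Fin d)) :
    lap (fun y => c - W y) x = - lap W x := by
  have hdW : Differentiable ℝ W := hW.differentiable (by norm_num)
  rw [aux_lap_eq _ (contDiff_const.sub hW) x, aux_lap_eq W hW x, ← Finset.sum_neg_distrib]
  refine Finset.sum_congr rfl fun i _ => ?_
  have h1 : fderiv ℝ (fun y => c - W y) = fun y => -fderiv ℝ W y := by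
    funext y
    rw [fderiv_fun_sub (differentiableAt_const c) (hdW y), fderiv_fun_const]
    simp
  rw [h1, fderiv_fun_neg]
  simp

lemma aux_nonneg {d : ℕ} (ν : ℝ) (hν : 0 < ν) (W p : EuclideanSpace ℝ (Fin d) → ℝ)
    (hW : ContDiff ℝ 2 W) (hW_bdd : ∃ M : ℝ, ∀ x, |W x| ≤ M)
    (hp : ∀ x, 0 ≤ p x)
    (heq : ∀ x, -ν * lap W x + W x = p x) :
    ∀ x, 0 ≤ W x := by
  obtain ⟨M, hM⟩ := hW_bdd
  have hbb : BddBelow (Set.range W) := ⟨-M, by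
    rintro y ⟨x, rfl⟩
    exact (abs_le.mp (hM x)).1⟩
  have hne : (Set.range W).Nonempty := ⟨W 0, 0, rfl⟩
  set m := sInf (Set.range W) with hmdef
  have hmle : ∀ x, m ≤ W x := fun x => csInf_le hbb ⟨x, rfl⟩
  have hkey : ∀ ε : ℝ, 0 < ε → -(ε * (2 * ν * d + 1)) < m := by
    intro ε hε
    obtain ⟨y, ⟨x₀, rfl⟩, hx₀⟩ := Real.lt_sInf_add_pos hne hε
    set v : EuclideanSpace ℝ (Fin d) → ℝ := fun y => W y + ε * ‖y - x₀‖ ^ 2 with hvdef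
    have hq2 : ContDiff ℝ 2 (fun y : EuclideanSpace ℝ (Fin d) => ‖y - x₀‖ ^ 2) :=
      (contDiff_norm_sq ℝ (n := 2)).comp (contDiff_id.sub contDiff_const)
    have hv : ContDiff ℝ 2 v := hW.add (contDiff_const.mul hq2)
    have hK : IsCompact (Metric.closedBall x₀ (2:ℝ)) := isCompact_closedBall x₀ 2
    have hx₀K : x₀ ∈ Metric.closedBall x₀ (2:ℝ) := Metric.mem_closedBall_self (by norm_num)
    obtain ⟨x₁, hx₁K, hminOn⟩ := hK.exists_isMinOn ⟨x₀, hx₀K⟩ hv.continuous.continuousOn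
    have hvx₀ : v x₀ = W x₀ := by simp [hvdef]
    have hvle : v x₁ ≤ v x₀ := hminOn hx₀K
    have hWlev : W x₁ ≤ v x₁ := by
      have : 0 ≤ ε * ‖x₁ - x₀‖ ^ 2 := by positivity
      simp only [hvdef]; linarith
    have hWx₁lt : W x₁ < m + ε := by
      have := hvle
      rw [hvx₀] at this
      linarith
    have hnle : ‖x₁ - x₀‖ ≤ 1 := by
      by_contra hcon
      push_neg at hcon
      have h1 : 1 < ‖x₁ - x₀‖ ^ 2 := by nlinarith [norm_nonneg (x₁ - x₀)]
      have h2 : m + ε < v x₁ := by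
        have := hmle x₁
        simp only [hvdef]
        nlinarith
      rw [hvx₀] at hvle
      linarith
    have hloc : IsLocalMin v x₁ := by
      refine hminOn.isLocalMin ?_
      refine Filter.mem_of_superset ((Metric.isOpen_ball).mem_nhds ?_) Metric.ball_subset_closedBall
      rw [Metric.mem_ball, dist_eq_norm]
      linarith
    have hsum : 0 ≤ ∑ i, fderiv ℝ (fderiv ℝ v) x₁ (EuclideanSpace.single i 1)
        (EuclideanSpace.single i 1) :=
      Finset.sum_nonneg fun i _ => aux_secondDeriv_nonneg hv hloc _
    have hsum2 : ∑ i, fderiv ℝ (fderiv ℝ v) x₁ (EuclideanSpace.single i 1)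
        (EuclideanSpace.single i 1) = lap W x₁ + 2 * ε * d := by
      rw [aux_lap_eq W hW x₁]
      rw [Finset.sum_congr rfl fun i _ => aux_second_pert W hW ε x₀ x₁ i]
      rw [Finset.sum_add_distrib, Finset.sum_const, Finset.card_univ]
      simp [mul_comm]
    have hlap : -(2 * ε * d) ≤ lap W x₁ := by
      rw [hsum2] at hsum
      linarith
    have hWeq : W x₁ = p x₁ + ν * lap W x₁ := by
      have := heq x₁
      linarith
    have hb : ν * (-(2 * ε * d)) ≤ ν * lap W x₁ :=
      mul_le_mul_of_nonneg_left hlap (le_of_lt hν)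
    have hWlb : -(ν * (2 * ε * d)) ≤ W x₁ := by
      have := hp x₁
      rw [hWeq]
      linarith
    nlinarith
  by_contra hcon
  push_neg at hcon
  obtain ⟨x, hx⟩ := hcon
  have hm : m < 0 := lt_of_le_of_lt (hmle x) hx
  set ε := -m / (2 * (2 * ν * d + 1)) with hε
  have hden : (0:ℝ) < 2 * (2 * ν * d + 1) := by positivity
  have hεpos : 0 < ε := div_pos (neg_pos.mpr hm) hden
  have := hkey ε hεpos
  have hcalc : ε * (2 * ν * d + 1) = -m / 2 := by
    rw [hε]
    field_simp
  rw [hcalc] at this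
  linarith [hmle x]

end Aux

/-- maximum principle for bounded solutions of the Brinkman
equation `-νΔW + W = p` on the whole space, with `0 ≤ p ≤ P_M`. -/
theorem stmt11 (d : ℕ) (hd : 1 ≤ d) (ν P_M : ℝ) (hν : 0 < ν) (hPM : 0 ≤ P_M)
    (W p : EuclideanSpace ℝ (Fin d) → ℝ)
    (hW_smooth : ContDiff ℝ 2 W)
    (hW_bdd : ∃ M : ℝ, ∀ x, |W x| ≤ M)
    (hp : ∀ x, 0 ≤ p x ∧ p x ≤ P_M)
    (heq : ∀ x, -ν * lap W x + W x = p x) :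
    ∀ x, 0 ≤ W x ∧ W x ≤ P_M := by
  intro x
  constructor
  · exact aux_nonneg ν hν W p hW_smooth hW_bdd (fun y => (hp y).1) heq x
  · have h := aux_nonneg ν hν (fun y => P_M - W y) (fun y => P_M - p y)
      (contDiff_const.sub hW_smooth)
      (by
        obtain ⟨M, hM⟩ := hW_bdd
        exact ⟨|P_M| + M, fun y => by
          have := hM y
          have h1 := abs_sub_abs_le_abs_sub P_M (W y)
          have := abs_sub (P_M) (W y)
          calc |P_M - W y| ≤ |P_M| + |W y| := abs_sub _ _
            _ ≤ |P_M| + M := by linarith [hM y]⟩)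
      (fun y => by show 0 ≤ P_M - p y; linarith [(hp y).2])
      (fun y => by
        show -ν * lap (fun z => P_M - W z) y + (P_M - W y) = P_M - p y
        rw [aux_lap_const_sub W hW_smooth P_M y]
        have := heq y
        ring_nf
        ring_nf at this
        linarith)
      x
    linarith
end

section
/- Let d ≥ 1, T > 0, and G : ℝ → ℝ be continuous and nonincreasing. Let p : ℝ^d × [0,T] → ℝ be continuous and nonnegative, W : ℝ^d × [0,T] → ℝ be C² in the space variable, and n : ℝ^d × [0,T] → ℝ be nonnegative, C¹, with spatial support contained in a fixed ball B_R for every t ∈ [0,T], satisfying pointwise ∂_t n - div(n∇W) = n G(p). Then for every t ∈ [0,T], ∫_{ℝ^d} n(x,t) dx ≤ e^{G(0)·t} ∫_{ℝ^d} n(x,0) dx. -/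
open Set MeasureTheory

lemma vdiv_eq_sum {d : ℕ} (v : EuclideanSpace ℝ (Fin d) → EuclideanSpace ℝ (Fin d)) (x) :
    vdiv v x = ∑ i, fderiv ℝ v x (EuclideanSpace.single i 1) i := by
  rw [vdiv, LinearMap.trace_eq_matrix_trace ℝ (EuclideanSpace.basisFun (Fin d) ℝ).toBasis,
    Matrix.trace]
  apply Finset.sum_congr rfl
  intro i _
  simp [Matrix.diag, LinearMap.toMatrix_apply]

lemma abs_coord_le {d : ℕ} (x : EuclideanSpace ℝ (Fin d)) (i : Fin d) : |x i| ≤ ‖x‖ := by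
  rw [EuclideanSpace.norm_eq]
  have h1 : |x i| = Real.sqrt (‖x i‖ ^ 2) := by
    rw [Real.sqrt_sq_eq_abs]; simp
  rw [h1]
  apply Real.sqrt_le_sqrt
  exact Finset.single_le_sum (f := fun j => ‖x j‖ ^ 2) (fun j _ => by positivity)
    (Finset.mem_univ i)

lemma integral_vdiv_eq_zero {d : ℕ} (hd : 1 ≤ d)
    (v : EuclideanSpace ℝ (Fin d) → EuclideanSpace ℝ (Fin d))
    (hv : ContDiff ℝ 1 v) (R : ℝ)
    (hsupp : ∀ x ∉ Metric.closedBall (0 : EuclideanSpace ℝ (Fin d)) R, v x = 0) :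
    ∫ x, vdiv v x = 0 := by
  obtain ⟨m, rfl⟩ : ∃ m, d = m + 1 := ⟨d - 1, (Nat.succ_pred_eq_of_pos hd).symm⟩
  set R' : ℝ := max R 0 with hR'
  have hsupp' : ∀ x : EuclideanSpace ℝ (Fin (m+1)), R' < ‖x‖ → v x = 0 := by
    intro x hx
    apply hsupp
    simp only [Metric.mem_closedBall, dist_zero_right, not_le]
    exact lt_of_le_of_lt (le_max_left R 0) hx
  -- derivative vanishes outside the ball
  have hdzero : ∀ x : EuclideanSpace ℝ (Fin (m+1)), R' < ‖x‖ → fderiv ℝ v x = 0 := by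
    intro x hx
    have hev : v =ᶠ[nhds x] (fun _ => 0) := by
      have : IsOpen {y : EuclideanSpace ℝ (Fin (m+1)) | R' < ‖y‖} :=
        isOpen_lt continuous_const continuous_norm
      filter_upwards [this.mem_nhds hx] with y hy using hsupp' y hy
    rw [hev.fderiv_eq, fderiv_fun_const]
    rfl
  set eL := EuclideanSpace.equiv (Fin (m+1)) ℝ with heL
  set w : (Fin (m+1) → ℝ) → (Fin (m+1) → ℝ) := fun y => eL (v (eL.symm y)) with hw
  have hwd : ∀ y, HasFDerivAt w
      ((eL.toContinuousLinearMap.comp (fderiv ℝ v (eL.symm y))).comp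
        eL.symm.toContinuousLinearMap) y := by
    intro y
    exact (eL.hasFDerivAt.comp _ ((hv.differentiable one_ne_zero _).hasFDerivAt)).comp y
      eL.symm.hasFDerivAt
  have hfd : ∀ y, fderiv ℝ w y =
      (eL.toContinuousLinearMap.comp (fderiv ℝ v (eL.symm y))).comp
        eL.symm.toContinuousLinearMap := fun y => (hwd y).fderiv
  -- divergence of w
  have hdivw : ∀ y, (∑ i, fderiv ℝ w y (Pi.single i 1) i) = vdiv v (eL.symm y) := by
    intro y
    rw [vdiv_eq_sum]
    apply Finset.sum_congr rfl
    intro i _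
    rw [hfd]
    rfl
  have hvdiv_cont : Continuous (vdiv v) := by
    have : Continuous (fun x => ∑ i, fderiv ℝ v x (EuclideanSpace.single i 1) i) := by
      apply continuous_finset_sum
      intro i _
      exact (continuous_apply i).comp ((PiLp.continuous_ofLp 2 _).comp ((hv.continuous_fderiv one_ne_zero).clm_apply continuous_const))
    simpa [funext (vdiv_eq_sum v)] using this
  have hvdiv_zero : ∀ x : EuclideanSpace ℝ (Fin (m+1)), R' < ‖x‖ → vdiv v x = 0 := by
    intro x hx
    rw [vdiv, hdzero x hx]
    simp
  set g : (Fin (m+1) → ℝ) → ℝ := fun y => vdiv v (eL.symm y) with hg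
  -- transfer the integral to the pi type
  have hmp := EuclideanSpace.volume_preserving_symm_measurableEquiv_toLp (Fin (m+1))
  have hstep1 : ∫ x, vdiv v x = ∫ y, g y := by
    rw [← hmp.integral_comp (MeasurableEquiv.toLp 2 (Fin (m+1) → ℝ)).symm.measurableEmbedding g]
    rfl
  set a : Fin (m+1) → ℝ := fun _ => -(R' + 1) with ha
  set b : Fin (m+1) → ℝ := fun _ => R' + 1 with hb
  have hR'0 : (0:ℝ) ≤ R' := le_max_right R 0
  have hab : a ≤ b := fun i => by
    simp only [ha, hb]; linarith
  have hout : ∀ y, y ∉ Icc a b → R' < ‖eL.symm y‖ := by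
    intro y hy
    have hex : ∃ i, y i < a i ∨ b i < y i := by
      by_contra h
      push_neg at h
      exact hy ⟨fun i => (h i).1, fun i => (h i).2⟩
    obtain ⟨i, hi⟩ := hex
    have h1 : R' + 1 < |y i| := by
      rcases hi with hi | hi
      · rw [abs_of_neg (by simp only [ha] at hi; linarith)]
        simp only [ha] at hi; linarith
      · rw [abs_of_pos (by simp only [hb] at hi; linarith)]
        simp only [hb] at hi; linarith
    have h2 : |y i| ≤ ‖eL.symm y‖ := abs_coord_le (eL.symm y) i
    linarith
  have hgz : ∀ y, y ∉ Icc a b → g y = 0 := fun y hy => hvdiv_zero _ (hout y hy)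
  have hstep2 : ∫ y, g y = ∫ y in Icc a b, g y :=
    (setIntegral_eq_integral_of_forall_compl_eq_zero hgz).symm
  -- the divergence theorem on the box
  have hwcont : Continuous w := eL.continuous.comp ((hv.continuous).comp eL.symm.continuous)
  have hwzero : ∀ y i, |y i| = R' + 1 → w y = 0 := by
    intro y i hyi
    have : R' < ‖eL.symm y‖ := by
      have h2 : |y i| ≤ ‖eL.symm y‖ := abs_coord_le (eL.symm y) i
      rw [hyi] at h2; linarith
    simp only [hw, hsupp' _ this, map_zero]
  have hdiv := integral_divergence_of_hasFDerivAt_off_countable a b hab w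
    (fun y => fderiv ℝ w y) ∅ Set.countable_empty hwcont.continuousOn
    (fun x _ => (hwd x).congr_fderiv (hfd x).symm)
    (by
      apply (hvdiv_cont.comp eL.symm.continuous).continuousOn.integrableOn_compact
        isCompact_Icc |>.congr_fun _ measurableSet_Icc
      intro y _
      exact (hdivw y).symm)
  have hbd : ∀ i : Fin (m+1),
      ((∫ x in Icc (a ∘ i.succAbove) (b ∘ i.succAbove), w (i.insertNth (b i) x) i) -
        ∫ x in Icc (a ∘ i.succAbove) (b ∘ i.succAbove), w (i.insertNth (a i) x) i) = 0 := by
    intro i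
    have h1 : ∀ x : Fin m → ℝ, w (i.insertNth (b i) x) = 0 := fun x =>
      hwzero _ i (by
        rw [Fin.insertNth_apply_same]
        simp only [hb]
        rw [abs_of_nonneg (by linarith)])
    have h2 : ∀ x : Fin m → ℝ, w (i.insertNth (a i) x) = 0 := fun x =>
      hwzero _ i (by
        rw [Fin.insertNth_apply_same]
        simp only [ha]
        rw [abs_neg, abs_of_nonneg (by linarith)])
    simp [h1, h2]
  rw [hstep1, hstep2]
  have : ∫ y in Icc a b, g y = ∫ y in Icc a b, ∑ i, fderiv ℝ w y (Pi.single i 1) i := by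
    apply setIntegral_congr_fun measurableSet_Icc
    intro y _
    exact (hdivw y).symm
  rw [this, hdiv, Finset.sum_eq_zero (fun i _ => hbd i)]

lemma vdiv_continuous {d : ℕ} (v : EuclideanSpace ℝ (Fin d) → EuclideanSpace ℝ (Fin d))
    (hv : ContDiff ℝ 1 v) : Continuous (vdiv v) := by
  have : Continuous (fun x => ∑ i, fderiv ℝ v x (EuclideanSpace.single i 1) i) := by
    apply continuous_finset_sum
    intro i _
    exact (continuous_apply i).comp ((PiLp.continuous_ofLp 2 _).comp ((hv.continuous_fderiv one_ne_zero).clm_apply continuous_const))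
  simpa [funext (vdiv_eq_sum v)] using this

lemma vdiv_zero_outside {d : ℕ} (v : EuclideanSpace ℝ (Fin d) → EuclideanSpace ℝ (Fin d))
    (R : ℝ) (hsupp : ∀ x ∉ Metric.closedBall (0 : EuclideanSpace ℝ (Fin d)) R, v x = 0)
    (x : EuclideanSpace ℝ (Fin d)) (hx : x ∉ Metric.closedBall (0 : EuclideanSpace ℝ (Fin d)) R) :
    vdiv v x = 0 := by
  have hev : v =ᶠ[nhds x] (fun _ => 0) := by
    have hop : IsOpen (Metric.closedBall (0 : EuclideanSpace ℝ (Fin d)) R)ᶜ :=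
      Metric.isClosed_closedBall.isOpen_compl
    filter_upwards [hop.mem_nhds hx] with y hy using hsupp y hy
  rw [vdiv, hev.fderiv_eq, fderiv_fun_const]
  simp

/-- Grönwall-type `L¹` bound for the transport equation with
growth `∂ₜ n - div(n∇W) = n G(p)`, for compactly (spatially) supported `n`. -/
theorem stmt12 (d : ℕ) (hd : 1 ≤ d) (T : ℝ) (hT : 0 < T)
    (G : ℝ → ℝ) (hGc : Continuous G) (hGmono : ∀ a b : ℝ, a ≤ b → G b ≤ G a)
    (p W n : EuclideanSpace ℝ (Fin d) → ℝ → ℝ)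
    (hp_cont : ContinuousOn (fun q : EuclideanSpace ℝ (Fin d) × ℝ => p q.1 q.2)
      (Set.univ ×ˢ Set.Icc 0 T))
    (hp_nonneg : ∀ x, ∀ t ∈ Set.Icc (0:ℝ) T, 0 ≤ p x t)
    (hW_smooth : ∀ t ∈ Set.Icc (0:ℝ) T, ContDiff ℝ 2 (fun x => W x t))
    (hn_nonneg : ∀ x, ∀ t ∈ Set.Icc (0:ℝ) T, 0 ≤ n x t)
    (hn_smooth : ContDiffOn ℝ 1 (fun q : EuclideanSpace ℝ (Fin d) × ℝ => n q.1 q.2)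
      (Set.univ ×ˢ Set.Icc 0 T))
    (R : ℝ)
    (hsupp : ∀ t ∈ Set.Icc (0:ℝ) T, ∀ x, x ∉ Metric.closedBall (0 : EuclideanSpace ℝ (Fin d)) R →
      n x t = 0)
    (hPDE : ∀ x, ∀ t ∈ Set.Icc (0:ℝ) T,
      derivWithin (fun s => n x s) (Set.Icc 0 T) t
        - vdiv (fun y => n y t • gradient (fun y' => W y' t) y) x
        = n x t * G (p x t)) :
    ∀ t ∈ Set.Icc (0:ℝ) T,
      (∫ x, n x t) ≤ Real.exp (G 0 * t) * ∫ x, n x 0 := by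
  set S : Set (EuclideanSpace ℝ (Fin d) × ℝ) := Set.univ ×ˢ Set.Icc 0 T with hS
  have hsUD : UniqueDiffOn ℝ S := uniqueDiffOn_univ.prod (uniqueDiffOn_Icc hT)
  set N : EuclideanSpace ℝ (Fin d) × ℝ → ℝ := fun q => n q.1 q.2 with hN
  set dn : EuclideanSpace ℝ (Fin d) → ℝ → ℝ :=
    fun x t => fderivWithin ℝ N S (x, t) ((0 : EuclideanSpace ℝ (Fin d)), (1 : ℝ)) with hdn
  -- slices in x are C¹
  have hslice : ∀ t ∈ Set.Icc (0:ℝ) T, ContDiff ℝ 1 (fun x => n x t) := by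
    intro t ht
    rw [← contDiffOn_univ]
    exact (hn_smooth.comp (contDiff_id.prodMk contDiff_const).contDiffOn
      (fun x (_ : x ∈ Set.univ) => ⟨Set.mem_univ x, ht⟩)).congr (fun x _ => rfl)
  -- time derivative
  have hderiv : ∀ x, ∀ t ∈ Set.Icc (0:ℝ) T,
      HasDerivWithinAt (fun s => n x s) (dn x t) (Set.Icc 0 T) t := by
    intro x t ht
    have h1 : HasFDerivWithinAt N (fderivWithin ℝ N S (x, t)) S (x, t) :=
      (hn_smooth.differentiableOn one_ne_zero (x, t) ⟨Set.mem_univ x, ht⟩).hasFDerivWithinAt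
    have h2 : HasDerivWithinAt (fun u : ℝ => ((x, u) : EuclideanSpace ℝ (Fin d) × ℝ))
        ((0 : EuclideanSpace ℝ (Fin d)), (1 : ℝ)) (Set.Icc 0 T) t :=
      ((hasDerivAt_const t x).prodMk (hasDerivAt_id t)).hasDerivWithinAt
    exact h1.comp_hasDerivWithinAt t h2 (fun u hu => ⟨Set.mem_univ x, hu⟩)
  have hderivWithin_eq : ∀ x, ∀ t ∈ Set.Icc (0:ℝ) T,
      derivWithin (fun s => n x s) (Set.Icc 0 T) t = dn x t := fun x t ht =>
    (hderiv x t ht).derivWithin ((uniqueDiffOn_Icc hT) t ht)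
  -- continuity of dn
  have hdncont : ContinuousOn (fun q : EuclideanSpace ℝ (Fin d) × ℝ => dn q.1 q.2) S := by
    have := (hn_smooth.continuousOn_fderivWithin hsUD le_rfl).clm_apply
      (continuousOn_const (c := ((0 : EuclideanSpace ℝ (Fin d)), (1 : ℝ))))
    exact this
  -- dn vanishes outside the ball
  have hdnzero : ∀ t ∈ Set.Icc (0:ℝ) T,
      ∀ x ∉ Metric.closedBall (0 : EuclideanSpace ℝ (Fin d)) R, dn x t = 0 := by
    intro t ht x hx
    rw [← hderivWithin_eq x t ht]
    rw [derivWithin_congr (fun u hu => hsupp u hu x hx) (hsupp t ht x hx)]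
    simp
  -- gradient is C¹
  have hgrad : ∀ t ∈ Set.Icc (0:ℝ) T, ContDiff ℝ 1 (gradient (fun y' => W y' t)) := by
    intro t ht
    have h1 : ContDiff ℝ 1 (fderiv ℝ (fun y' => W y' t)) :=
      (hW_smooth t ht).fderiv_right (by norm_num)
    exact (InnerProductSpace.toDual ℝ (EuclideanSpace ℝ (Fin d))).symm.contDiff.comp h1
  set v : ℝ → EuclideanSpace ℝ (Fin d) → EuclideanSpace ℝ (Fin d) :=
    fun t y => n y t • gradient (fun y' => W y' t) y with hv
  have hvC1 : ∀ t ∈ Set.Icc (0:ℝ) T, ContDiff ℝ 1 (v t) :=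
    fun t ht => (hslice t ht).smul (hgrad t ht)
  have hvsupp : ∀ t ∈ Set.Icc (0:ℝ) T,
      ∀ y ∉ Metric.closedBall (0 : EuclideanSpace ℝ (Fin d)) R, v t y = 0 := by
    intro t ht y hy
    simp [hv, hsupp t ht y hy]
  have hvdiv0 : ∀ t ∈ Set.Icc (0:ℝ) T, ∫ x, vdiv (v t) x = 0 :=
    fun t ht => integral_vdiv_eq_zero hd _ (hvC1 t ht) R (hvsupp t ht)
  -- integrability
  have hint : ∀ f : EuclideanSpace ℝ (Fin d) → ℝ, Continuous f →
      (∀ x ∉ Metric.closedBall (0:EuclideanSpace ℝ (Fin d)) R, f x = 0) → Integrable f :=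
    fun f hf h => hf.integrable_of_hasCompactSupport
      (HasCompactSupport.intro (isCompact_closedBall 0 R) h)
  have hnint : ∀ t ∈ Set.Icc (0:ℝ) T, Integrable (fun x => n x t) :=
    fun t ht => hint _ (hslice t ht).continuous (fun x hx => hsupp t ht x hx)
  have hdivint : ∀ t ∈ Set.Icc (0:ℝ) T, Integrable (vdiv (v t)) := fun t ht =>
    hint _ (vdiv_continuous _ (hvC1 t ht)) (vdiv_zero_outside _ R (hvsupp t ht))
  have hpslice : ∀ t ∈ Set.Icc (0:ℝ) T, Continuous (fun x => p x t) := by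
    intro t ht
    rw [← continuousOn_univ]
    exact (hp_cont.comp ((continuous_id.prodMk continuous_const).continuousOn)
      (fun x (_ : x ∈ Set.univ) => ⟨Set.mem_univ x, ht⟩)).congr (fun x _ => rfl)
  have hgint : ∀ t ∈ Set.Icc (0:ℝ) T, Integrable (fun x => n x t * G (p x t)) := by
    intro t ht
    apply hint _ ((hslice t ht).continuous.mul (hGc.comp (hpslice t ht)))
    intro x hx
    simp [hsupp t ht x hx]
  have hdneq : ∀ t ∈ Set.Icc (0:ℝ) T, ∀ x, dn x t = vdiv (v t) x + n x t * G (p x t) := by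
    intro t ht x
    have h := hPDE x t ht
    rw [hderivWithin_eq x t ht] at h
    linarith
  have hdnint : ∀ t ∈ Set.Icc (0:ℝ) T, Integrable (fun x => dn x t) := by
    intro t ht
    rw [funext (hdneq t ht)]
    exact (hdivint t ht).add (hgint t ht)
  have hF'eq : ∀ t ∈ Set.Icc (0:ℝ) T, ∫ x, dn x t = ∫ x, n x t * G (p x t) := by
    intro t ht
    rw [funext (hdneq t ht), integral_add (hdivint t ht) (hgint t ht), hvdiv0 t ht, zero_add]
  have hbound : ∀ t ∈ Set.Icc (0:ℝ) T, ∫ x, dn x t ≤ G 0 * ∫ x, n x t := by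
    intro t ht
    rw [hF'eq t ht, ← integral_const_mul]
    apply integral_mono (hgint t ht) (((hnint t ht)).const_mul (G 0))
    intro x
    calc n x t * G (p x t) ≤ n x t * G 0 :=
          mul_le_mul_of_nonneg_left (hGmono 0 _ (hp_nonneg x t ht)) (hn_nonneg x t ht)
      _ = G 0 * n x t := mul_comm _ _
  -- compact bounds
  have hKS : (Metric.closedBall (0:EuclideanSpace ℝ (Fin d)) R) ×ˢ Set.Icc (0:ℝ) T ⊆ S :=
    Set.prod_mono (Set.subset_univ _) Set.Subset.rfl
  have hKcomp : IsCompact ((Metric.closedBall (0:EuclideanSpace ℝ (Fin d)) R) ×ˢ Set.Icc (0:ℝ) T) :=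
    (isCompact_closedBall _ _).prod isCompact_Icc
  obtain ⟨C, hC⟩ := hKcomp.exists_bound_of_continuousOn (hn_smooth.continuousOn.mono hKS)
  obtain ⟨M, hM⟩ := hKcomp.exists_bound_of_continuousOn (hdncont.mono hKS)
  have hIndInt : ∀ c : ℝ, Integrable
      ((Metric.closedBall (0:EuclideanSpace ℝ (Fin d)) R).indicator (fun _ => c)) := by
    intro c
    apply IntegrableOn.integrable_indicator _ measurableSet_closedBall
    exact integrableOn_const measure_closedBall_lt_top.ne
  set F : ℝ → ℝ := fun t => ∫ x, n x t with hF
  -- continuity of F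
  have hFcont : ContinuousOn F (Set.Icc 0 T) := by
    intro t0 ht0
    have h := tendsto_integral_filter_of_dominated_convergence (μ := volume)
      (l := nhdsWithin t0 (Set.Icc 0 T)) (F := fun t x => n x t) (f := fun x => n x t0)
      ((Metric.closedBall (0:EuclideanSpace ℝ (Fin d)) R).indicator (fun _ => C))
      ?_ ?_ (hIndInt C) ?_
    · exact h
    · filter_upwards [self_mem_nhdsWithin] with t ht
      exact (hslice t ht).continuous.aestronglyMeasurable
    · filter_upwards [self_mem_nhdsWithin] with t ht
      apply Filter.Eventually.of_forall
      intro x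
      by_cases hx : x ∈ Metric.closedBall (0:EuclideanSpace ℝ (Fin d)) R
      · rw [Set.indicator_of_mem hx]
        exact hC (x, t) ⟨hx, ht⟩
      · rw [Set.indicator_of_notMem hx, hsupp t ht x hx]
        simp
    · apply Filter.Eventually.of_forall
      intro x
      have hNc : ContinuousWithinAt N S (x, t0) :=
        hn_smooth.continuousOn _ ⟨Set.mem_univ x, ht0⟩
      have htend : Filter.Tendsto (fun t => ((x, t) : EuclideanSpace ℝ (Fin d) × ℝ))
          (nhdsWithin t0 (Set.Icc 0 T)) (nhdsWithin (x, t0) S) := by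
        rw [tendsto_nhdsWithin_iff]
        constructor
        · exact ((continuous_const.prodMk continuous_id).tendsto (t0 : ℝ)).mono_left
            nhdsWithin_le_nhds
        · filter_upwards [self_mem_nhdsWithin] with u hu using ⟨Set.mem_univ x, hu⟩
      exact hNc.tendsto.comp htend
  -- right slope convergence
  have hslope : ∀ t ∈ Set.Ico (0:ℝ) T,
      Filter.Tendsto (fun z => (z - t)⁻¹ * (F z - F t)) (nhdsWithin t (Set.Ioi t))
        (nhds (∫ x, dn x t)) := by
    intro t ht
    have htIcc : t ∈ Set.Icc (0:ℝ) T := ⟨ht.1, ht.2.le⟩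
    have hIoc : Set.Ioc t T ∈ nhdsWithin t (Set.Ioi t) :=
      Ioc_mem_nhdsGT_of_mem ⟨le_rfl, ht.2⟩
    have h := tendsto_integral_filter_of_dominated_convergence (μ := volume)
      (l := nhdsWithin t (Set.Ioi t))
      (F := fun z x => (z - t)⁻¹ * (n x z - n x t)) (f := fun x => dn x t)
      ((Metric.closedBall (0:EuclideanSpace ℝ (Fin d)) R).indicator (fun _ => M))
      ?_ ?_ (hIndInt M) ?_
    · apply h.congr'
      filter_upwards [hIoc] with z hz
      have hzI : z ∈ Set.Icc (0:ℝ) T := ⟨le_trans ht.1 hz.1.le, hz.2⟩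
      rw [integral_const_mul, integral_sub (hnint z hzI) (hnint t htIcc)]
    · filter_upwards [hIoc] with z hz
      have hzI : z ∈ Set.Icc (0:ℝ) T := ⟨le_trans ht.1 hz.1.le, hz.2⟩
      exact (continuous_const.mul ((hslice z hzI).continuous.sub
        (hslice t htIcc).continuous)).aestronglyMeasurable
    · filter_upwards [hIoc] with z hz
      apply Filter.Eventually.of_forall
      intro x
      have hzI : z ∈ Set.Icc (0:ℝ) T := ⟨le_trans ht.1 hz.1.le, hz.2⟩
      by_cases hx : x ∈ Metric.closedBall (0:EuclideanSpace ℝ (Fin d)) R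
      · rw [Set.indicator_of_mem hx]
        have hmvt : ‖n x z - n x t‖ ≤ M * ‖z - t‖ := by
          apply (convex_Icc (0:ℝ) T).norm_image_sub_le_of_norm_hasDerivWithin_le
            (f := fun s => n x s) (f' := fun s => dn x s)
            (fun u hu => hderiv x u hu) (fun u hu => hM (x, u) ⟨hx, hu⟩) htIcc hzI
        have hzt : (0:ℝ) < z - t := sub_pos.2 hz.1
        rw [Real.norm_eq_abs, abs_mul, abs_inv, abs_of_pos hzt]
        rw [Real.norm_eq_abs, Real.norm_eq_abs, abs_of_pos hzt] at hmvt
        calc (z - t)⁻¹ * |n x z - n x t| ≤ (z - t)⁻¹ * (M * (z - t)) := by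
              apply mul_le_mul_of_nonneg_left hmvt (by positivity)
          _ = M := by field_simp
      · rw [Set.indicator_of_notMem hx, hsupp z hzI x hx, hsupp t htIcc x hx]
        simp
    · apply Filter.Eventually.of_forall
      intro x
      have h5 : HasDerivWithinAt (fun s => n x s) (dn x t) (Set.Ioc t T) t :=
        (hderiv x t htIcc).mono (fun u hu => ⟨le_trans ht.1 hu.1.le, hu.2⟩)
      rw [hasDerivWithinAt_iff_tendsto_slope,
        Set.diff_singleton_eq_self (fun hc => (lt_irrefl t hc.1).elim),
        nhdsWithin_Ioc_eq_nhdsGT ht.2] at h5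
      apply h5.congr
      intro z
      rw [slope_def_field, div_eq_inv_mul]
  -- Grönwall
  have hgron := le_gronwallBound_of_liminf_deriv_right_le (f := F)
    (f' := fun t => ∫ x, dn x t) (δ := F 0) (K := G 0) (ε := 0) (a := 0) (b := T)
    hFcont
    (fun t ht r hr => ((hslope t ht).eventually_lt_const hr).frequently)
    le_rfl
    (fun t ht => by simpa using hbound t ⟨ht.1, ht.2.le⟩)
  intro t ht
  have := hgron t ht
  rw [sub_zero, gronwallBound_ε0] at this
  calc (∫ x, n x t) = F t := rfl
    _ ≤ F 0 * Real.exp (G 0 * t) := this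
    _ = Real.exp (G 0 * t) * ∫ x, n x 0 := mul_comm _ _
end

section
/- Let ν > 0 and P_M > 0, and define p : (-∞,0) → ℝ by p(x) = P_M (1 - e^{x/√(ν+1)} / (ν + 1 + √(ν(ν+1)))). Then 0 < p(x) < P_M for all x < 0, and the left limit of p at 0 equals P_M (1 - 1/(ν + 1 + √(ν(ν+1)))), which is strictly positive. In particular, since the traveling wave pressure is identically 0 on (0,∞), the pressure has a jump discontinuity of height P_M (1 - 1/(ν + 1 + √(ν(ν+1)))) at the interface x = 0. -/
open Set Filter

/-- the traveling wave pressure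
`p(x) = P_M (1 - e^{x/√(ν+1)}/(ν+1+√(ν(ν+1))))` satisfies `0 < p < P_M` on
`(-∞,0)`, and its left limit at `0` is the strictly positive number
`P_M (1 - 1/(ν+1+√(ν(ν+1))))`: the pressure jumps at the interface. -/
theorem stmt17 (ν P_M : ℝ) (hν : 0 < ν) (hPM : 0 < P_M)
    (p : ℝ → ℝ)
    (hp : p = fun x =>
      P_M * (1 - Real.exp (x / Real.sqrt (ν + 1)) / (ν + 1 + Real.sqrt (ν * (ν + 1))))) :
    (∀ x < (0:ℝ), 0 < p x ∧ p x < P_M) ∧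
    Tendsto p (nhdsWithin 0 (Set.Iio 0))
      (nhds (P_M * (1 - 1 / (ν + 1 + Real.sqrt (ν * (ν + 1)))))) ∧
    0 < P_M * (1 - 1 / (ν + 1 + Real.sqrt (ν * (ν + 1)))) := by
  have hD : 1 < ν + 1 + Real.sqrt (ν * (ν + 1)) := by
    nlinarith [Real.sqrt_nonneg (ν * (ν + 1))]
  have hD0 : (0:ℝ) < ν + 1 + Real.sqrt (ν * (ν + 1)) := by linarith
  refine ⟨?_, ?_, ?_⟩
  · intro x hx
    have hs : 0 < Real.sqrt (ν + 1) := Real.sqrt_pos.mpr (by linarith)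
    have he1 : Real.exp (x / Real.sqrt (ν + 1)) < 1 := by
      rw [Real.exp_lt_one_iff]
      exact div_neg_of_neg_of_pos hx hs
    have he0 : 0 < Real.exp (x / Real.sqrt (ν + 1)) := Real.exp_pos _
    have hq : Real.exp (x / Real.sqrt (ν + 1)) / (ν + 1 + Real.sqrt (ν * (ν + 1))) < 1 := by
      rw [div_lt_one hD0]; linarith
    have hq0 : 0 < Real.exp (x / Real.sqrt (ν + 1)) / (ν + 1 + Real.sqrt (ν * (ν + 1))) :=
      div_pos he0 hD0
    subst hp
    simp only
    constructor <;> nlinarith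
  · subst hp
    have hcont : Continuous fun x : ℝ =>
        P_M * (1 - Real.exp (x / Real.sqrt (ν + 1)) / (ν + 1 + Real.sqrt (ν * (ν + 1)))) := by
      fun_prop
    have := (hcont.tendsto 0).mono_left (nhdsWithin_le_nhds (s := Set.Iio 0))
    simpa using this
  · have : 1 / (ν + 1 + Real.sqrt (ν * (ν + 1))) < 1 := by
      rw [div_lt_one hD0]; linarith
    nlinarith
end

section
/- Let ν > 0 and P_M > 0, set W₀ := √ν P_M/(√ν + √(ν+1)), and define W : ℝ → ℝ by W(x) = W₀ e^{-x/√ν} for x ≥ 0 and W(x) = P_M (1 - e^{x/√(ν+1)} / (1 + √(ν/(ν+1)))) for x < 0, and define p : ℝ → ℝ by p(x) = 0 for x ≥ 0 and p(x) = P_M (1 - e^{x/√(ν+1)} / (ν + 1 + √(ν(ν+1)))) for x < 0. Then: (i) W is continuous and continuously differentiable on all of ℝ; (ii) -νW''(x) + W(x) = 0 for all x > 0; (iii) -νW''(x) + W(x) = p(x) for all x < 0; and (iv) p(x) = (W(x) + νP_M)/(1+ν) for all x < 0, i.e. p = H(W) inside the tumor region for the growth law G(p) = P_M - p. -/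
open Set

/-- the explicit traveling wave profile `(W, p)` is a `C¹`
solution of the Brinkman equation `-νW'' + W = p` across the interface,
and `p = H(W) = (W + νP_M)/(1+ν)` inside the tumor region. -/
theorem stmt18 (ν P_M : ℝ) (hν : 0 < ν) (hPM : 0 < P_M)
    (W₀ : ℝ) (hW₀ : W₀ = Real.sqrt ν * P_M / (Real.sqrt ν + Real.sqrt (ν + 1)))
    (W p : ℝ → ℝ)
    (hW : W = fun x => if 0 ≤ x then W₀ * Real.exp (-x / Real.sqrt ν)
      else P_M * (1 - Real.exp (x / Real.sqrt (ν + 1)) / (1 + Real.sqrt (ν / (ν + 1)))))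
    (hp : p = fun x => if 0 ≤ x then 0
      else P_M * (1 - Real.exp (x / Real.sqrt (ν + 1)) / (ν + 1 + Real.sqrt (ν * (ν + 1))))) :
    Continuous W ∧ ContDiff ℝ 1 W ∧
    (∀ x > (0:ℝ), -ν * deriv (deriv W) x + W x = 0) ∧
    (∀ x < (0:ℝ), -ν * deriv (deriv W) x + W x = p x) ∧
    (∀ x < (0:ℝ), p x = (W x + ν * P_M) / (1 + ν)) := by
  have hν1 : (0:ℝ) < ν + 1 := by linarith
  have hdiv : Real.sqrt (ν/(ν+1)) = Real.sqrt ν / Real.sqrt (ν+1) := Real.sqrt_div hν.le _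
  have hmul : Real.sqrt (ν*(ν+1)) = Real.sqrt ν * Real.sqrt (ν+1) := Real.sqrt_mul hν.le _
  rw [hdiv] at hW
  rw [hmul] at hp
  set s := Real.sqrt ν with hs_def
  set t := Real.sqrt (ν+1) with ht_def
  have hs : 0 < s := Real.sqrt_pos.mpr hν
  have ht : 0 < t := Real.sqrt_pos.mpr hν1
  have hs2 : s^2 = ν := Real.sq_sqrt hν.le
  have ht2 : t^2 = ν+1 := Real.sq_sqrt hν1.le
  clear_value s t
  clear hs_def ht_def hdiv hmul
  subst hs2
  -- now ht2 : t^2 = s^2 + 1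
  have hst : (0:ℝ) < s + t := by positivity
  have hc1 : (0:ℝ) < 1 + s/t := by positivity
  -- derivatives of the two branches
  have hfd : ∀ x : ℝ, HasDerivAt (fun y : ℝ => W₀ * Real.exp (-y/s))
      (W₀ * (Real.exp (-x/s) * (-1/s))) x := by
    intro x
    have h1 : HasDerivAt (fun y : ℝ => -y/s) (-1/s) x := ((hasDerivAt_id x).neg).div_const s
    exact (h1.exp).const_mul W₀
  have hfd2 : ∀ x : ℝ, HasDerivAt (fun y : ℝ => W₀ * (Real.exp (-y/s) * (-1/s)))
      (W₀ * (Real.exp (-x/s) * (-1/s) * (-1/s))) x := by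
    intro x
    have h1 : HasDerivAt (fun y : ℝ => -y/s) (-1/s) x := ((hasDerivAt_id x).neg).div_const s
    exact ((h1.exp).mul_const (-1/s)).const_mul W₀
  have hgd : ∀ x : ℝ, HasDerivAt (fun y : ℝ => P_M * (1 - Real.exp (y/t) / (1 + s/t)))
      (P_M * -(Real.exp (x/t) * (1/t) / (1 + s/t))) x := by
    intro x
    have h1 : HasDerivAt (fun y : ℝ => y/t) (1/t) x := (hasDerivAt_id x).div_const t
    exact (((h1.exp).div_const (1+s/t)).const_sub 1).const_mul P_M
  have hgd2 : ∀ x : ℝ, HasDerivAt (fun y : ℝ => P_M * -(Real.exp (y/t) * (1/t) / (1 + s/t)))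
      (P_M * -(Real.exp (x/t) * (1/t) * (1/t) / (1 + s/t))) x := by
    intro x
    have h1 : HasDerivAt (fun y : ℝ => y/t) (1/t) x := (hasDerivAt_id x).div_const t
    exact ((((h1.exp).mul_const (1/t)).div_const (1+s/t)).neg).const_mul P_M
  -- matching of values and derivatives at the interface
  have key0 : W₀ = P_M * (1 - Real.exp (0/t) / (1 + s/t)) := by
    rw [hW₀, zero_div, Real.exp_zero]
    field_simp
    ring
  have keyd : W₀ * (Real.exp (-0/s) * (-1/s)) = P_M * -(Real.exp (0/t) * (1/t) / (1 + s/t)) := by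
    rw [hW₀]
    simp only [neg_zero, zero_div, Real.exp_zero, one_mul, mul_one]
    field_simp
    ring
  -- W agrees with the two branches
  have hWf : ∀ y : ℝ, 0 ≤ y → W y = W₀ * Real.exp (-y/s) := by
    intro y hy; rw [hW]; simp only [if_pos hy]
  have hWg : ∀ y : ℝ, y ≤ 0 → W y = P_M * (1 - Real.exp (y/t) / (1 + s/t)) := by
    intro y hy
    rcases hy.eq_or_lt with h | h
    · rw [h, hWf 0 le_rfl, key0]; simp
    · rw [hW]; simp only [if_neg (not_le.mpr h)]
  -- the global derivative
  set D : ℝ → ℝ := fun x => if 0 ≤ x then W₀ * (Real.exp (-x/s) * (-1/s))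
    else P_M * -(Real.exp (x/t) * (1/t) / (1 + s/t)) with hD_def
  have hWD : ∀ x : ℝ, HasDerivAt W (D x) x := by
    intro x
    rcases lt_trichotomy x 0 with hx | rfl | hx
    · have he : W =ᶠ[nhds x] (fun y => P_M * (1 - Real.exp (y/t) / (1 + s/t))) := by
        filter_upwards [Iio_mem_nhds hx] with y hy
        exact hWg y hy.le
      have hDx : D x = P_M * -(Real.exp (x/t) * (1/t) / (1 + s/t)) := if_neg (not_le.mpr hx)
      rw [hDx]
      exact (hgd x).congr_of_eventuallyEq he
    · have hD0 : D 0 = W₀ * (Real.exp (-0/s) * (-1/s)) := if_pos le_rfl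
      have h1 : HasDerivWithinAt W (D 0) (Ici 0) 0 := by
        rw [hD0]
        exact ((hfd 0).hasDerivWithinAt).congr (fun y hy => hWf y hy) (hWf 0 le_rfl)
      have h2 : HasDerivWithinAt W (D 0) (Iic 0) 0 := by
        rw [hD0, keyd]
        exact ((hgd 0).hasDerivWithinAt).congr (fun y hy => hWg y hy) (hWg 0 le_rfl)
      have h3 := h2.union h1
      rw [Iic_union_Ici] at h3
      exact hasDerivWithinAt_univ.mp h3
    · have he : W =ᶠ[nhds x] (fun y => W₀ * Real.exp (-y/s)) := by
        filter_upwards [Ioi_mem_nhds hx] with y hy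
        exact hWf y hy.le
      have hDx : D x = W₀ * (Real.exp (-x/s) * (-1/s)) := if_pos hx.le
      rw [hDx]
      exact (hfd x).congr_of_eventuallyEq he
  have hdiff : Differentiable ℝ W := fun x => (hWD x).differentiableAt
  have hderiv : deriv W = D := funext fun x => (hWD x).deriv
  have hDcont : Continuous D := by
    rw [hD_def]
    apply Continuous.if
    · intro a ha
      have : a ∈ frontier (Ici (0:ℝ)) := ha
      rw [frontier_Ici, mem_singleton_iff] at this
      subst this
      exact keyd
    · fun_prop
    · fun_prop
  have hC1 : ContDiff ℝ 1 W := contDiff_one_iff_deriv.mpr ⟨hdiff, hderiv ▸ hDcont⟩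
  refine ⟨hC1.continuous, hC1, ?_, ?_, ?_⟩
  · intro x hx
    have he : deriv W =ᶠ[nhds x] (fun y => W₀ * (Real.exp (-y/s) * (-1/s))) := by
      filter_upwards [Ioi_mem_nhds hx] with y hy
      rw [hderiv]; exact if_pos hy.le
    have h2 : deriv (deriv W) x = W₀ * (Real.exp (-x/s) * (-1/s) * (-1/s)) :=
      ((hfd2 x).congr_of_eventuallyEq he).deriv
    rw [h2, hWf x hx.le]
    field_simp
    ring
  · intro x hx
    have he : deriv W =ᶠ[nhds x] (fun y => P_M * -(Real.exp (y/t) * (1/t) / (1 + s/t))) := by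
      filter_upwards [Iio_mem_nhds hx] with y hy
      rw [hderiv]; exact if_neg (not_le.mpr hy)
    have h2 : deriv (deriv W) x = P_M * -(Real.exp (x/t) * (1/t) * (1/t) / (1 + s/t)) :=
      ((hgd2 x).congr_of_eventuallyEq he).deriv
    rw [h2, hWg x hx.le, hp]
    simp only [if_neg (not_le.mpr hx)]
    rw [show (s:ℝ)^2 = t^2 - 1 from by linarith]
    have hc2 : (0:ℝ) < t^2 - 1 + 1 + s*t := by nlinarith
    have hc4 : t * s + t ^ 2 ≠ 0 := by positivity
    field_simp
    ring_nf
    field_simp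
    ring
  · intro x hx
    rw [hp, hWg x hx.le]
    simp only [if_neg (not_le.mpr hx)]
    rw [show (s:ℝ)^2 = t^2 - 1 from by linarith]
    have hc2 : (0:ℝ) < t^2 - 1 + 1 + s*t := by nlinarith
    have hc3 : (0:ℝ) < 1 + (t^2 - 1) := by nlinarith
    have hc4 : t * s + t ^ 2 ≠ 0 := by positivity
    field_simp
    ring_nf
    field_simp
    ring
end

section
/- Let ν > 0, W₀ > 0 and G₀ > 0. Suppose n : (0,∞) → ℝ is C¹, satisfies 0 ≤ n(x) ≤ 1 for all x > 0, and solves -n'(x) · (W₀/√ν)(1 - e^{-x/√ν}) = n(x) · (G₀ + (W₀/ν) e^{-x/√ν}) for all x > 0. Then n(x) = 0 for all x > 0. -/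
open Set

/-- the traveling wave density ahead of the tumor front
vanishes identically: if `0 ≤ n ≤ 1` is `C¹` on `(0,∞)` and solves
`-n'(x) (W₀/√ν)(1 - e^{-x/√ν}) = n(x)(G₀ + (W₀/ν) e^{-x/√ν})`, then `n ≡ 0`
on `(0,∞)`. -/
theorem stmt19 (ν W₀ G₀ : ℝ) (hν : 0 < ν) (hW₀ : 0 < W₀) (hG₀ : 0 < G₀)
    (n : ℝ → ℝ)
    (hn_smooth : ContDiffOn ℝ 1 n (Set.Ioi 0))
    (hn_bd : ∀ x > (0:ℝ), 0 ≤ n x ∧ n x ≤ 1)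
    (hODE : ∀ x > (0:ℝ),
      -deriv n x * (W₀ / Real.sqrt ν) * (1 - Real.exp (-x / Real.sqrt ν))
        = n x * (G₀ + (W₀ / ν) * Real.exp (-x / Real.sqrt ν))) :
    ∀ x > (0:ℝ), n x = 0 := by
  set s := Real.sqrt ν with hs
  have hs0 : 0 < s := Real.sqrt_pos.mpr hν
  have hss : s * s = ν := Real.mul_self_sqrt hν.le
  set m : ℝ → ℝ := fun x => n x * (1 - Real.exp (-x / s)) with hm
  have hdn : ∀ x ∈ Ioi (0:ℝ), DifferentiableAt ℝ n x := by
    intro x hx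
    exact (hn_smooth.differentiableOn one_ne_zero).differentiableAt (isOpen_Ioi.mem_nhds hx)
  have hb : ∀ x : ℝ, HasDerivAt (fun x : ℝ => 1 - Real.exp (-x / s))
      ((1 / s) * Real.exp (-x / s)) x := by
    intro x
    have h1 : HasDerivAt (fun x : ℝ => -x / s) (-1 / s) x := by
      simpa using ((hasDerivAt_id x).neg.div_const s)
    have h2 := (Real.hasDerivAt_exp (-x / s)).comp x h1
    have h3 := (hasDerivAt_const x (1 : ℝ)).sub h2
    exact h3.congr_deriv (by ring)
  have hmd : ∀ x ∈ Ioi (0:ℝ), HasDerivAt m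
      (deriv n x * (1 - Real.exp (-x / s)) + n x * ((1 / s) * Real.exp (-x / s))) x := by
    intro x hx
    exact ((hdn x hx).hasDerivAt.mul (hb x))
  have hderiv_nonpos : ∀ x ∈ Ioi (0:ℝ), deriv m x ≤ 0 := by
    intro x hx
    rw [(hmd x hx).deriv]
    have h := hODE x hx
    have hN : 0 ≤ n x := (hn_bd x hx).1
    have key : (deriv n x * (1 - Real.exp (-x / s)) + n x * ((1 / s) * Real.exp (-x / s)))
        * (W₀ / s) = -(n x * G₀) := by
      have hW : W₀ / ν = (W₀ / s) * (1 / s) := by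
        rw [← hss]; field_simp
      rw [hW] at h
      field_simp at h ⊢
      nlinarith [h]
    have hWs : 0 < W₀ / s := div_pos hW₀ hs0
    nlinarith [mul_nonneg hN hG₀.le]
  have hdm : DifferentiableOn ℝ m (interior (Ioi (0:ℝ))) := by
    rw [interior_Ioi]
    intro x hx
    exact ((hmd x hx).differentiableAt).differentiableWithinAt
  have hcm : ContinuousOn m (Ioi (0:ℝ)) := by
    intro x hx
    exact ((hmd x hx).differentiableAt).continuousAt.continuousWithinAt
  have hanti : AntitoneOn m (Ioi (0:ℝ)) := by
    refine antitoneOn_of_deriv_nonpos (convex_Ioi 0) hcm hdm ?_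
    rw [interior_Ioi]; exact hderiv_nonpos
  intro x hx
  have hbx : 0 < 1 - Real.exp (-x / s) := by
    have : Real.exp (-x / s) < 1 := Real.exp_lt_one_iff.mpr
      (div_neg_of_neg_of_pos (neg_neg_iff_pos.mpr hx) hs0)
    linarith
  have hmle : ∀ y ∈ Ioo (0:ℝ) x, m x ≤ y / s := by
    intro y hy
    have h1 : m x ≤ m y := hanti hy.1 (lt_trans hy.1 hy.2) hy.2.le
    have h2 : m y ≤ 1 - Real.exp (-y / s) := by
      have hbny : 0 < 1 - Real.exp (-y / s) := by
        have : Real.exp (-y / s) < 1 := Real.exp_lt_one_iff.mpr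
          (div_neg_of_neg_of_pos (neg_neg_iff_pos.mpr hy.1) hs0)
        linarith
      calc m y = n y * (1 - Real.exp (-y / s)) := rfl
        _ ≤ 1 * (1 - Real.exp (-y / s)) :=
            mul_le_mul_of_nonneg_right (hn_bd y hy.1).2 hbny.le
        _ = 1 - Real.exp (-y / s) := one_mul _
    have h3 : 1 - Real.exp (-y / s) ≤ y / s := by
      have h := Real.add_one_le_exp (-y / s)
      have h' : -y / s = -(y / s) := neg_div s y
      linarith
    linarith
  have hmx0 : m x ≤ 0 := by
    by_contra hc
    push_neg at hc
    set y := min (x / 2) (s * m x / 2) with hy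
    have hy0 : 0 < y := lt_min (by linarith) (by positivity)
    have hyx : y < x := lt_of_le_of_lt (min_le_left _ _) (by linarith)
    have h4 := hmle y ⟨hy0, hyx⟩
    have h5 : y / s ≤ m x / 2 := by
      have : y ≤ s * m x / 2 := min_le_right _ _
      rw [div_le_iff₀ hs0] at *
      nlinarith
    linarith
  have hmx : m x = 0 :=
    le_antisymm hmx0 (mul_nonneg (hn_bd x hx).1 hbx.le)
  have : n x * (1 - Real.exp (-x / s)) = 0 := hmx
  rcases mul_eq_zero.mp this with h | h
  · exact h
  · linarith
end
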